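/- Let G = (V,E) be a directed weighted graph with k negative vertices (vertices having at least one negative outgoing edge). There exists a graph G' = (V',E') with V ⊆ V' and |V'| = |V| + k such that: (1) each negative vertex of G' has exactly one negative outgoing edge; (2) G' has exactly k negative vertices; (3) for all s,t ∈ V and every hop bound h, the minimum weight of an s–t path with at most h negative edges is the same in G and G'. The construction: for each negative vertex u with outgoing edges (u,v₁),…,(u,v_ℓ) where (u,v₁) has minimum weight, add a new vertex u', an edge (u,u') of weight w(u,v₁), and replace each (u,v_i) by (u',v_i) of weight w(u,v_i) − w(u,v₁) ≥ 0. -/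

import Mathlib

/-- A directed graph with real edge weights, with vertex set a subset of an
ambient type `W`. -/
structure WDigraph (W : Type*) where
  verts : Set W
  Edge : W → W → Prop
  w : W → W → ℝ
  edge_mem : ∀ u v, Edge u v → u ∈ verts ∧ v ∈ verts

/-- A negative vertex: one with at least one negative-weight outgoing edge. -/
def NegVertex {W : Type*} (G : WDigraph W) (u : W) : Prop :=
  u ∈ G.verts ∧ ∃ v, G.Edge u v ∧ G.w u v < 0

/-- The weight of a walk (given as a list of vertices) under edge weights `w`. -/
noncomputable def pathWeight {W : Type*} (w : W → W → ℝ) : List W → ℝ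
  | [] => 0
  | [_] => 0
  | u :: v :: rest => w u v + pathWeight w (v :: rest)

/-- The number of negative edges along a walk. -/
noncomputable def negCount {W : Type*} (w : W → W → ℝ) (p : List W) : ℕ :=
  (p.zip p.tail).countP (fun e => decide (w e.1 e.2 < 0))

/-- `p` is a walk of `G` from `s` to `t`. -/
def WalkIn {W : Type*} (G : WDigraph W) (s t : W) (p : List W) : Prop :=
  List.Chain' G.Edge p ∧ (∀ x ∈ p, x ∈ G.verts) ∧
    p.head? = some s ∧ p.getLast? = some t

lemma negCount_nil {W : Type*} (w : W → W → ℝ) : negCount w ([] : List W) = 0 := rfl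

lemma negCount_singleton {W : Type*} (w : W → W → ℝ) (a : W) : negCount w [a] = 0 := rfl

lemma negCount_cons {W : Type*} (w : W → W → ℝ) (a b : W) (l : List W) :
    negCount w (a :: b :: l) = (if w a b < 0 then 1 else 0) + negCount w (b :: l) := by
  simp only [negCount, List.zip_cons_cons, List.tail_cons, List.countP_cons]
  by_cases h : w a b < 0 <;> simp [h, Nat.add_comm]

lemma pathWeight_cons₂ {W : Type*} (w : W → W → ℝ) (a b : W) (l : List W) :
    pathWeight w (a :: b :: l) = w a b + pathWeight w (b :: l) := rfl

/-- Lemma 1.5: any graph with `k` negative vertices can be transformed into a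
graph with `k` extra vertices, still `k` negative vertices each with exactly
one negative outgoing edge, preserving all `h`-negative-hop distances. -/
theorem one_negative_outgoing_edge {W : Type*} [Infinite W]
    (G : WDigraph W) (hfin : G.verts.Finite) (k : ℕ)
    (hk : {u | NegVertex G u}.ncard = k) :
    ∃ G' : WDigraph W,
      G.verts ⊆ G'.verts ∧ G'.verts.Finite ∧
      G'.verts.ncard = G.verts.ncard + k ∧
      (∀ u, NegVertex G' u → ∃! v, G'.Edge u v ∧ G'.w u v < 0) ∧
      {u | NegVertex G' u}.ncard = k ∧
      (∀ s ∈ G.verts, ∀ t ∈ G.verts, ∀ h : ℕ,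
        (∀ p, WalkIn G s t p → negCount G.w p ≤ h →
          ∃ q, WalkIn G' s t q ∧ negCount G'.w q ≤ h ∧
            pathWeight G'.w q ≤ pathWeight G.w p) ∧
        (∀ q, WalkIn G' s t q → negCount G'.w q ≤ h →
          ∃ p, WalkIn G s t p ∧ negCount G.w p ≤ h ∧
            pathWeight G.w p ≤ pathWeight G'.w q)) := by
  classical
  obtain ⟨T, hTsub, hTfin, hTcard⟩ :=
    (Set.Finite.infinite_compl hfin).exists_subset_ncard_eq k
  have hNfin : {u | NegVertex G u}.Finite := hfin.subset (fun u hu => hu.1)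
  have hTV : ∀ x ∈ T, x ∉ G.verts := fun x hx => hTsub hx
  have hcard : hNfin.toFinset.card = hTfin.toFinset.card := by
    rw [← Set.ncard_eq_toFinset_card _ hNfin, ← Set.ncard_eq_toFinset_card _ hTfin,
        hk, hTcard]
  set e := Finset.equivOfCardEq hcard with he
  set f : W → W := fun u => if h : u ∈ hNfin.toFinset then (e ⟨u, h⟩ : W) else u with hf
  set g : W → W := fun x => if h : x ∈ hTfin.toFinset then ((e.symm ⟨x, h⟩ : W)) else x with hg
  have hfT : ∀ u, NegVertex G u → f u ∈ T := by
    intro u hu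
    have h1 : u ∈ hNfin.toFinset := hNfin.mem_toFinset.2 hu
    have h2 : f u = (e ⟨u, h1⟩ : W) := by simp only [hf]; rw [dif_pos h1]
    rw [h2]
    exact hTfin.mem_toFinset.1 (e ⟨u, h1⟩).2
  have hgf : ∀ u, NegVertex G u → g (f u) = u := by
    intro u hu
    have h1 : u ∈ hNfin.toFinset := hNfin.mem_toFinset.2 hu
    have h2 : f u = (e ⟨u, h1⟩ : W) := by simp only [hf]; rw [dif_pos h1]
    have h3 : f u ∈ hTfin.toFinset := by rw [h2]; exact (e ⟨u, h1⟩).2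
    have h4 : g (f u) = (e.symm ⟨f u, h3⟩ : W) := by simp only [hg]; rw [dif_pos h3]
    rw [h4]
    have h5 : (⟨f u, h3⟩ : {x // x ∈ hTfin.toFinset}) = e ⟨u, h1⟩ := Subtype.ext h2
    rw [h5, Equiv.symm_apply_apply]
  have hTfsurj : ∀ x ∈ T, ∃ u, NegVertex G u ∧ f u = x := by
    intro x hx
    have h1 : x ∈ hTfin.toFinset := hTfin.mem_toFinset.2 hx
    refine ⟨(e.symm ⟨x, h1⟩ : W), hNfin.mem_toFinset.1 (e.symm ⟨x, h1⟩).2, ?_⟩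
    have h2 : f (e.symm ⟨x, h1⟩ : W) = (e (e.symm ⟨x, h1⟩) : W) := by
      simp only [hf]; rw [dif_pos (e.symm ⟨x, h1⟩).2]
    rw [h2, Equiv.apply_symm_apply]
  -- minimal negative edge
  have hminex : ∀ u, NegVertex G u → ∃ v, (G.Edge u v ∧ G.w u v < 0) ∧
      ∀ v', G.Edge u v' → G.w u v' < 0 → G.w u v ≤ G.w u v' := by
    intro u hu
    obtain ⟨huV, v1, hv1, hv1n⟩ := hu
    obtain ⟨v, hv, hvmin⟩ := Set.exists_min_image {v | G.Edge u v ∧ G.w u v < 0} (G.w u)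
      (hfin.subset fun x hx => (G.edge_mem u x hx.1).2) ⟨v1, hv1, hv1n⟩
    exact ⟨v, hv, fun v' h1 h2 => hvmin v' ⟨h1, h2⟩⟩
  choose v0 hv0 using hminex
  set m : W → ℝ := fun u => if h : NegVertex G u then G.w u (v0 u h) else 0 with hm
  have hm_neg : ∀ u, NegVertex G u → m u < 0 := by
    intro u h
    simp only [hm]; rw [dif_pos h]; exact (hv0 u h).1.2
  have hm_min : ∀ u, NegVertex G u → ∀ v, G.Edge u v → G.w u v < 0 → m u ≤ G.w u v := by
    intro u h v hv hvn
    simp only [hm]; rw [dif_pos h]; exact (hv0 u h).2 v hv hvn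
  -- the new graph
  set Edge' : W → W → Prop := fun a b =>
    (G.Edge a b ∧ 0 ≤ G.w a b) ∨ (NegVertex G a ∧ b = f a) ∨
    (∃ u, NegVertex G u ∧ a = f u ∧ G.Edge u b ∧ G.w u b < 0) with hE
  set w' : W → W → ℝ := fun a b =>
    if a ∈ T then G.w (g a) b - m (g a) else if b ∈ T then m a else G.w a b with hw'
  have hw1 : ∀ a b, a ∉ T → b ∉ T → w' a b = G.w a b := by
    intro a b ha hb; simp only [hw']; rw [if_neg ha, if_neg hb]
  have hw2 : ∀ a b, a ∉ T → b ∈ T → w' a b = m a := by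
    intro a b ha hb; simp only [hw']; rw [if_neg ha, if_pos hb]
  have hw3 : ∀ a b, a ∈ T → w' a b = G.w (g a) b - m (g a) := by
    intro a b ha; simp only [hw']; rw [if_pos ha]
  have hmem' : ∀ a b, Edge' a b → a ∈ G.verts ∪ T ∧ b ∈ G.verts ∪ T := by
    intro a b hab
    simp only [hE] at hab
    rcases hab with ⟨h1, _⟩ | ⟨h1, rfl⟩ | ⟨u, hu, rfl, h2, _⟩
    · exact ⟨Or.inl (G.edge_mem a b h1).1, Or.inl (G.edge_mem a b h1).2⟩
    · exact ⟨Or.inl h1.1, Or.inr (hfT a h1)⟩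
    · exact ⟨Or.inr (hfT u hu), Or.inl (G.edge_mem u b h2).2⟩
  -- vertex-not-in-T helpers
  have hVnT : ∀ a, a ∈ G.verts → a ∉ T := fun a ha h => hTV a h ha
  -- direction 1: expand walks of G into walks of G'
  have dir1 : ∀ n (p : List W), p.length ≤ n → List.Chain' G.Edge p →
      (∀ x ∈ p, x ∈ G.verts) →
      ∃ q, List.Chain' Edge' q ∧ (∀ x ∈ q, x ∈ G.verts ∪ T) ∧
        q.head? = p.head? ∧ q.getLast? = p.getLast? ∧
        pathWeight w' q = pathWeight G.w p ∧ negCount w' q = negCount G.w p := by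
    intro n
    induction n with
    | zero =>
      intro p hp _ _
      rw [List.length_eq_zero_iff.mp (Nat.le_zero.mp hp)]
      exact ⟨[], List.isChain_nil, by simp, rfl, rfl, rfl, rfl⟩
    | succ n ih =>
      intro p hlen hchain hmem
      rcases p with _ | ⟨a, _ | ⟨b, rest⟩⟩
      · exact ⟨[], List.isChain_nil, by simp, rfl, rfl, rfl, rfl⟩
      · refine ⟨[a], List.isChain_singleton a, ?_, rfl, rfl, rfl, rfl⟩
        intro x hx
        exact Or.inl (hmem x hx)
      · rw [List.Chain', List.isChain_cons_cons] at hchain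
        obtain ⟨hab, hchain⟩ := hchain
        obtain ⟨q', hq'chain, hq'mem, hq'head, hq'last, hq'w, hq'c⟩ :=
          ih (b :: rest) (by simpa using Nat.le_of_succ_le_succ hlen) hchain
            (fun x hx => hmem x (List.mem_cons_of_mem a hx))
        obtain ⟨q'', rfl⟩ : ∃ q'', q' = b :: q'' := by
          cases q' with
          | nil => simp at hq'head
          | cons c q'' =>
            simp only [List.head?_cons] at hq'head
            exact ⟨q'', by rw [Option.some_inj.mp hq'head]⟩
        have haV : a ∈ G.verts := hmem a (by simp)
        have hbV : b ∈ G.verts := hmem b (by simp)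
        have haT : a ∉ T := hVnT a haV
        have hbT : b ∉ T := hVnT b hbV
        by_cases hneg : G.w a b < 0
        · have hNa : NegVertex G a := ⟨haV, b, hab, hneg⟩
          have hfaT : f a ∈ T := hfT a hNa
          have e1 : w' a (f a) = m a := hw2 _ _ haT hfaT
          have e2 : w' (f a) b = G.w a b - m a := by
            rw [hw3 _ _ hfaT, hgf a hNa]
          refine ⟨a :: f a :: b :: q'', ?_, ?_, rfl, ?_, ?_, ?_⟩
          · rw [List.Chain', List.isChain_cons_cons, List.isChain_cons_cons]
            exact ⟨Or.inr (Or.inl ⟨hNa, rfl⟩),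
              Or.inr (Or.inr ⟨a, hNa, rfl, hab, hneg⟩), hq'chain⟩
          · intro x hx
            rcases List.mem_cons.mp hx with rfl | hx
            · exact Or.inl haV
            rcases List.mem_cons.mp hx with rfl | hx
            · exact Or.inr hfaT
            · exact hq'mem x hx
          · simp only [List.getLast?_cons_cons]; exact hq'last
          · rw [pathWeight_cons₂, pathWeight_cons₂, e1, e2, hq'w, pathWeight_cons₂]
            ring
          · rw [negCount_cons, negCount_cons, e1, e2, hq'c, negCount_cons,
              if_pos (hm_neg a hNa), if_pos hneg,
              if_neg (not_lt.mpr (sub_nonneg.mpr (hm_min a hNa b hab hneg)))]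
            omega
        · have e1 : w' a b = G.w a b := hw1 _ _ haT hbT
          refine ⟨a :: b :: q'', ?_, ?_, rfl, ?_, ?_, ?_⟩
          · rw [List.Chain', List.isChain_cons_cons]
            exact ⟨Or.inl ⟨hab, not_lt.mp hneg⟩, hq'chain⟩
          · intro x hx
            rcases List.mem_cons.mp hx with rfl | hx
            · exact Or.inl haV
            · exact hq'mem x hx
          · simp only [List.getLast?_cons_cons]; exact hq'last
          · rw [pathWeight_cons₂, pathWeight_cons₂, e1, hq'w]
          · rw [negCount_cons, negCount_cons, e1, hq'c]
  -- direction 2: contract walks of G' into walks of G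
  have dir2 : ∀ n (q : List W), q.length ≤ n → List.Chain' Edge' q →
      (∀ x ∈ q, x ∈ G.verts ∪ T) →
      (∀ x, q.head? = some x → x ∉ T) → (∀ x, q.getLast? = some x → x ∉ T) →
      ∃ p, List.Chain' G.Edge p ∧ (∀ x ∈ p, x ∈ G.verts) ∧
        p.head? = q.head? ∧ p.getLast? = q.getLast? ∧
        pathWeight G.w p = pathWeight w' q ∧ negCount G.w p = negCount w' q := by
    intro n
    induction n with
    | zero =>
      intro q hq _ _ _ _
      rw [List.length_eq_zero_iff.mp (Nat.le_zero.mp hq)]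
      exact ⟨[], List.isChain_nil, by simp, rfl, rfl, rfl, rfl⟩
    | succ n ih =>
      intro q hlen hchain hmem hhead hlast
      rcases q with _ | ⟨a, _ | ⟨b, rest⟩⟩
      · exact ⟨[], List.isChain_nil, by simp, rfl, rfl, rfl, rfl⟩
      · have haT : a ∉ T := hhead a rfl
        have haV : a ∈ G.verts := (hmem a (by simp)).resolve_right haT
        refine ⟨[a], List.isChain_singleton a, ?_, rfl, rfl, rfl, rfl⟩
        intro x hx; rw [List.mem_singleton] at hx; subst hx; exact haV
      · have haT : a ∉ T := hhead a rfl
        rw [List.Chain', List.isChain_cons_cons] at hchain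
        obtain ⟨hab, hchain⟩ := hchain
        rw [hE] at hab
        rcases hab with ⟨hab, habw⟩ | ⟨hNa, rfl⟩ | ⟨u, hNu, hequ, _, _⟩
        · -- nonnegative original edge
          have haV : a ∈ G.verts := (G.edge_mem a b hab).1
          have hbV : b ∈ G.verts := (G.edge_mem a b hab).2
          have hbT : b ∉ T := hVnT b hbV
          obtain ⟨p', hp'chain, hp'mem, hp'head, hp'last, hp'w, hp'c⟩ :=
            ih (b :: rest) (by simpa using Nat.le_of_succ_le_succ hlen) hchain
              (fun x hx => hmem x (List.mem_cons_of_mem a hx))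
              (fun x hx => by rw [List.head?_cons, Option.some_inj] at hx; subst hx; exact hbT)
              (fun x hx => hlast x (by rw [List.getLast?_cons_cons]; exact hx))
          obtain ⟨p'', rfl⟩ : ∃ p'', p' = b :: p'' := by
            cases p' with
            | nil => simp at hp'head
            | cons c p'' =>
              simp only [List.head?_cons] at hp'head
              exact ⟨p'', by rw [Option.some_inj.mp hp'head]⟩
          have e1 : w' a b = G.w a b := hw1 _ _ haT hbT
          refine ⟨a :: b :: p'', ?_, ?_, rfl, ?_, ?_, ?_⟩
          · rw [List.Chain', List.isChain_cons_cons]; exact ⟨hab, hp'chain⟩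
          · intro x hx
            rcases List.mem_cons.mp hx with rfl | hx
            · exact haV
            · exact hp'mem x hx
          · simp only [List.getLast?_cons_cons]; exact hp'last
          · rw [pathWeight_cons₂, pathWeight_cons₂, e1, hp'w]
          · rw [negCount_cons, negCount_cons, e1, hp'c]
        · -- split edge a → f a
          have haV : a ∈ G.verts := hNa.1
          have hfaT : f a ∈ T := hfT a hNa
          cases rest with
          | nil => exact absurd (hlast (f a) (by simp)) (not_not.mpr hfaT)
          | cons c rest' =>
            rw [List.isChain_cons_cons] at hchain
            obtain ⟨hbc, hchain⟩ := hchain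
            rw [hE] at hbc
            rcases hbc with ⟨h1, _⟩ | ⟨h1, _⟩ | ⟨u, hNu, hequ, huc, hucw⟩
            · exact absurd hfaT (hVnT _ (G.edge_mem _ _ h1).1)
            · exact absurd hfaT (hVnT _ h1.1)
            · have huA : u = a := by
                have := hgf a hNa
                rw [hequ] at this
                rw [← this, hgf u hNu]
              subst huA
              have hcV : c ∈ G.verts := (G.edge_mem u c huc).2
              have hcT : c ∉ T := hVnT c hcV
              obtain ⟨p', hp'chain, hp'mem, hp'head, hp'last, hp'w, hp'c⟩ :=
                ih (c :: rest') (by simp at hlen ⊢; omega) hchain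
                  (fun x hx => hmem x (by
                    rcases List.mem_cons.mp hx with rfl | hx
                    · exact List.mem_cons_of_mem _ (List.mem_cons_of_mem _ List.mem_cons_self)
                    · exact List.mem_cons_of_mem _ (List.mem_cons_of_mem _ (List.mem_cons_of_mem _ hx))))
                  (fun x hx => by rw [List.head?_cons, Option.some_inj] at hx; subst hx; exact hcT)
                  (fun x hx => hlast x (by
                    rw [List.getLast?_cons_cons, List.getLast?_cons_cons]; exact hx))
              obtain ⟨p'', rfl⟩ : ∃ p'', p' = c :: p'' := by
                cases p' with
                | nil => simp at hp'head
                | cons d p'' =>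
                  simp only [List.head?_cons] at hp'head
                  exact ⟨p'', by rw [Option.some_inj.mp hp'head]⟩
              have e1 : w' u (f u) = m u := hw2 _ _ haT hfaT
              have e2 : w' (f u) c = G.w u c - m u := by
                rw [hw3 _ _ hfaT, hgf u hNa]
              refine ⟨u :: c :: p'', ?_, ?_, rfl, ?_, ?_, ?_⟩
              · rw [List.Chain', List.isChain_cons_cons]; exact ⟨huc, hp'chain⟩
              · intro x hx
                rcases List.mem_cons.mp hx with rfl | hx
                · exact haV
                · exact hp'mem x hx
              · simp only [List.getLast?_cons_cons]; exact hp'last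
              · rw [pathWeight_cons₂, pathWeight_cons₂, pathWeight_cons₂, e1, e2, hp'w]
                ring
              · rw [negCount_cons, negCount_cons, negCount_cons, e1, e2, hp'c,
                  if_pos (hm_neg u hNa), if_pos hucw,
                  if_neg (not_lt.mpr (sub_nonneg.mpr (hm_min u hNa c huc hucw)))]
                omega
        · -- a = f u ∈ T, impossible since a ∉ T
          exact absurd (hequ ▸ hfT u hNu) haT
  refine ⟨⟨G.verts ∪ T, Edge', w', hmem'⟩, Set.subset_union_left, hfin.union hTfin, ?_, ?_, ?_, ?_⟩
  · -- cardinality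
    rw [Set.ncard_union_eq (Set.disjoint_left.mpr (fun x hx hxT => hTV x hxT hx)) hfin hTfin,
      hTcard]
  · -- unique negative outgoing edge
    rintro u ⟨huV, v, hv, hvn⟩
    have hNu : NegVertex G u := by
      replace hv : Edge' u v := hv
      simp only [hE] at hv
      rcases hv with ⟨h1, h2⟩ | ⟨h1, rfl⟩ | ⟨u', hu', rfl, h2, h3⟩
      · exfalso
        have : w' u v = G.w u v :=
          hw1 _ _ (hVnT u (G.edge_mem u v h1).1) (hVnT v (G.edge_mem u v h1).2)
        replace hvn : w' u v < 0 := hvn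
        rw [this] at hvn; exact absurd h2 (not_le.mpr hvn)
      · exact h1
      · exfalso
        have hfT' : f u' ∈ T := hfT u' hu'
        have : w' (f u') v = G.w u' v - m u' := by rw [hw3 _ _ hfT', hgf u' hu']
        replace hvn : w' (f u') v < 0 := hvn
        rw [this] at hvn
        exact absurd hvn (not_lt.mpr (sub_nonneg.mpr (hm_min u' hu' v h2 h3)))
    have huT : u ∉ T := hVnT u hNu.1
    have hfuT : f u ∈ T := hfT u hNu
    refine ⟨f u, ⟨Or.inr (Or.inl ⟨hNu, rfl⟩), ?_⟩, ?_⟩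
    · show w' u (f u) < 0
      rw [hw2 _ _ huT hfuT]; exact hm_neg u hNu
    · rintro y ⟨hy, hyn⟩
      replace hyn : w' u y < 0 := hyn
      replace hy : Edge' u y := hy
      simp only [hE] at hy
      rcases hy with ⟨h1, h2⟩ | ⟨h1, rfl⟩ | ⟨u', hu', hequ, h2, h3⟩
      · exfalso
        rw [hw1 _ _ (hVnT u (G.edge_mem u y h1).1) (hVnT y (G.edge_mem u y h1).2)] at hyn
        exact absurd h2 (not_le.mpr hyn)
      · rfl
      · exact absurd (hequ ▸ hfT u' hu') huT
  · -- negative vertex count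
    have hset : {x | NegVertex (⟨G.verts ∪ T, Edge', w', hmem'⟩ : WDigraph W) x}
        = {x | NegVertex G x} := by
      ext a
      simp only [Set.mem_setOf_eq]
      constructor
      · rintro ⟨haV, v, hv, hvn⟩
        replace hvn : w' a v < 0 := hvn
        replace hv : Edge' a v := hv
        simp only [hE] at hv
        rcases hv with ⟨h1, h2⟩ | ⟨h1, rfl⟩ | ⟨u', hu', rfl, h2, h3⟩
        · exfalso
          rw [hw1 _ _ (hVnT a (G.edge_mem a v h1).1) (hVnT v (G.edge_mem a v h1).2)] at hvn
          exact absurd h2 (not_le.mpr hvn)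
        · exact h1
        · exfalso
          have : w' (f u') v = G.w u' v - m u' := by rw [hw3 _ _ (hfT u' hu'), hgf u' hu']
          rw [this] at hvn
          exact absurd hvn (not_lt.mpr (sub_nonneg.mpr (hm_min u' hu' v h2 h3)))
      · intro hNa
        refine ⟨Or.inl hNa.1, f a, Or.inr (Or.inl ⟨hNa, rfl⟩), ?_⟩
        show w' a (f a) < 0
        rw [hw2 _ _ (hVnT a hNa.1) (hfT a hNa)]
        exact hm_neg a hNa
    rw [hset, hk]
  · -- walk equivalence
    intro s hs t ht h
    constructor
    · rintro p ⟨hchain, hmemp, hheadp, hlastp⟩ hnc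
      obtain ⟨q, h1, h2, h3, h4, h5, h6⟩ := dir1 p.length p le_rfl hchain hmemp
      refine ⟨q, ?_, ?_, ?_⟩
      · exact ⟨h1, h2, by rw [h3, hheadp], by rw [h4, hlastp]⟩
      · show negCount w' q ≤ h
        rw [h6]; exact hnc
      · show pathWeight w' q ≤ pathWeight G.w p
        rw [h5]
    · rintro q ⟨hchain, hmemq, hheadq, hlastq⟩ hnc
      obtain ⟨p, h1, h2, h3, h4, h5, h6⟩ := dir2 q.length q le_rfl hchain hmemq
        (fun x hx => by rw [hheadq, Option.some_inj] at hx; subst hx; exact hVnT s hs)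
        (fun x hx => by rw [hlastq, Option.some_inj] at hx; subst hx; exact hVnT t ht)
      refine ⟨p, ?_, ?_, ?_⟩
      · exact ⟨h1, h2, by rw [h3, hheadq], by rw [h4, hlastq]⟩
      · show negCount G.w p ≤ h
        rw [h6]; exact hnc
      · show pathWeight G.w p ≤ pathWeight w' q
        rw [h5]
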